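/- arXiv:2501.11789 — 2 statements merged into one kernel-verified Lean document; each statement's English description precedes it below -/
import Mathlib

section
/- Suppose (U'₁,U'₂,<') is the result of applying a case II coherent extended Nielsen transformation to a coherent extended word equation (U₁,U₂,<). If a boundary (i,j) cuts (i',j') with respect to (U'₁,U'₂,<'), then (i,ν(i,j)) cuts (i',ν(i',j')) with respect to (U₁,U₂,<). -/
open scoped Classical

namespace ExtWordEq

/-- The type of (candidate) boundary orders: relations on pairs (i,j). -/
abbrev BRel : Type := ℕ × ℕ → ℕ × ℕ → Prop

variable {X : Type*}

/-- The `i`-th side of the word equation (`i = 1` gives `U₁`, anything else `U₂`). -/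
def word (U₁ U₂ : List X) (i : ℕ) : List X := if i = 1 then U₁ else U₂

/-- The variable `U_{i,j}` (1-indexed), as an optional value. -/
def letter (U₁ U₂ : List X) (b : ℕ × ℕ) : Option X := (word U₁ U₂ b.1)[b.2 - 1]?

/-- `b` is a boundary of the word equation `(U₁, U₂)`. -/
def Boundary (U₁ U₂ : List X) (b : ℕ × ℕ) : Prop :=
  (b.1 = 1 ∨ b.1 = 2) ∧ 1 ≤ b.2 ∧ b.2 ≤ (word U₁ U₂ b.1).length

/-- `b` is a boundary of `(U₁, U₂)` or one of the conventional boundaries `(1,0)`, `(2,0)`. -/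
def EBoundary (U₁ U₂ : List X) (b : ℕ × ℕ) : Prop :=
  (b.1 = 1 ∨ b.1 = 2) ∧ b.2 ≤ (word U₁ U₂ b.1).length

/-- Incomparability `a ≈ b` for a strict order. -/
def Incomp (lt : BRel) (a b : ℕ × ℕ) : Prop := ¬ lt a b ∧ ¬ lt b a

/-- `lt` is a boundary order for the word equation `(U₁, U₂)`:
a strict weak order on the boundaries (together with the conventional boundaries
`(1,0) ≈ (2,0)`), extending `(i,j) < (i,j+1)` and with `(1,m) ≈ (2,n)`. -/
structure BoundaryOrder (U₁ U₂ : List X) (lt : BRel) : Prop where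
  irrefl : ∀ a, EBoundary U₁ U₂ a → ¬ lt a a
  trans : ∀ a b c, EBoundary U₁ U₂ a → EBoundary U₁ U₂ b → EBoundary U₁ U₂ c →
    lt a b → lt b c → lt a c
  incomp_trans : ∀ a b c, EBoundary U₁ U₂ a → EBoundary U₁ U₂ b → EBoundary U₁ U₂ c →
    Incomp lt a b → Incomp lt b c → Incomp lt a c
  succ : ∀ i j : ℕ, EBoundary U₁ U₂ (i, j + 1) → lt (i, j) (i, j + 1)
  top : Incomp lt (1, U₁.length) (2, U₂.length)
  bot : Incomp lt (1, 0) (2, 0)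

/-- `L(U_{i,1} U_{i,2} ⋯ U_{i,j})` where `L` is the additive extension of a length
assignment on variables. -/
def prefixLen (U₁ U₂ : List X) (L : X → ℕ) (b : ℕ × ℕ) : ℕ :=
  (((word U₁ U₂ b.1).take b.2).map L).sum

/-- The extended word equation `(U₁, U₂, lt)` is coherent. -/
def Coherent (U₁ U₂ : List X) (lt : BRel) : Prop :=
  ∃ L : X → ℕ, (∀ x, 0 < L x) ∧
    ∀ a b, Boundary U₁ U₂ a → Boundary U₁ U₂ b →
      (lt a b ↔ prefixLen U₁ U₂ L a < prefixLen U₁ U₂ L b)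

/-- The boundary `a` cuts the boundary `b`. -/
def Cuts (U₁ U₂ : List X) (lt : BRel) (a b : ℕ × ℕ) : Prop :=
  Boundary U₁ U₂ a ∧ Boundary U₁ U₂ b ∧ a ≠ b ∧
    lt (a.1, a.2 - 1) b ∧ lt (b.1, b.2 - 1) a

/-- The boundary `a` mirrors the boundary `b`. -/
def Mirrors (U₁ U₂ : List X) (lt : BRel) (a b : ℕ × ℕ) : Prop :=
  Boundary U₁ U₂ a ∧ Boundary U₁ U₂ b ∧ letter U₁ U₂ a = letter U₁ U₂ b ∧
    (¬ Incomp lt a b ∨ ¬ Incomp lt (a.1, a.2 - 1) (b.1, b.2 - 1))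

/-- Edge relation of the cut graph `G_{U₁,U₂,<}`. -/
def CutEdge (U₁ U₂ : List X) (lt : BRel) (a b : ℕ × ℕ) : Prop :=
  ∃ c, Cuts U₁ U₂ lt a c ∧ Mirrors U₁ U₂ lt c b

/-- `w 0, w 1, …, w n` is a cycle (of length `n ≥ 1`) in the cut graph. -/
def IsCycle (U₁ U₂ : List X) (lt : BRel) (n : ℕ) (w : ℕ → ℕ × ℕ) : Prop :=
  0 < n ∧ w n = w 0 ∧ ∀ k < n, CutEdge U₁ U₂ lt (w k) (w (k + 1))

/-- The cut graph `G_{U₁,U₂,<}` is acyclic. -/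
def Acyclic (U₁ U₂ : List X) (lt : BRel) : Prop :=
  ¬ ∃ n w, IsCycle U₁ U₂ lt n w

variable [DecidableEq X]

/-- Case I extended Nielsen transformation (here `x = U_{1,1}`, `y = U_{2,1}`,
and `T(y) = x`). -/
def NielsenI (U₁ U₂ : List X) (lt : BRel) (U₁' U₂' : List X) (lt' : BRel) : Prop :=
  ∃ x y : X, U₁.head? = some x ∧ U₂.head? = some y ∧
    Incomp lt (1, 1) (2, 1) ∧
    U₁' = (U₁.map fun z => if z = y then x else z).tail ∧
    U₂' = (U₂.map fun z => if z = y then x else z).tail ∧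
    BoundaryOrder U₁' U₂' lt' ∧
    ∀ a b : ℕ × ℕ, EBoundary U₁' U₂' a → EBoundary U₁' U₂' b →
      (lt' a b ↔ lt (a.1, a.2 + 1) (b.1, b.2 + 1))

/-- The substitution `T(x) = y x` (identity on other variables), applied to a word. -/
def expand (x y : X) (l : List X) : List X :=
  l.flatMap fun z => if z = x then [y, x] else [z]

/-- The map `μ(i,j) = j + #{j' ≤ j : U_{i,j'} = x} − 1` (as a map on boundaries),
where `x = U_{1,1}`. -/
def mu (U₁ U₂ : List X) (x : X) (b : ℕ × ℕ) : ℕ × ℕ :=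
  (b.1, b.2 + ((word U₁ U₂ b.1).take b.2).count x - 1)

/-- The map `ν(i,j) = j − #{j' ≤ j : U'_{i,j'} = x} + 1` (as a map on boundaries),
where `x = U_{1,1}`. -/
def nu (U₁' U₂' : List X) (x : X) (b : ℕ × ℕ) : ℕ × ℕ :=
  (b.1, b.2 - ((word U₁' U₂' b.1).take b.2).count x + 1)

/-- Membership in `B⁻ = B ∖ {(2,1)}`. -/
def Bminus (U₁ U₂ : List X) (b : ℕ × ℕ) : Prop := Boundary U₁ U₂ b ∧ b ≠ (2, 1)

/-- Membership in `B'⁻ = {(i, μ(i,j)) : (i,j) ∈ B⁻}` (`x = U_{1,1}`). -/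
def Bpminus (U₁ U₂ : List X) (x : X) (b' : ℕ × ℕ) : Prop :=
  ∃ b, Bminus U₁ U₂ b ∧ mu U₁ U₂ x b = b'

/-- Case II extended Nielsen transformation, with the heads `x = U_{1,1}`,
`y = U_{2,1}` made explicit. -/
def NielsenIIxy (U₁ U₂ : List X) (lt : BRel) (U₁' U₂' : List X) (lt' : BRel)
    (x y : X) : Prop :=
  U₁.head? = some x ∧ U₂.head? = some y ∧
  lt (2, 1) (1, 1) ∧
  U₁' = (expand x y U₁).tail ∧
  U₂' = (expand x y U₂).tail ∧
  BoundaryOrder U₁' U₂' lt' ∧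
  ∀ a b, Bpminus U₁ U₂ x a → Bpminus U₁ U₂ x b →
    (lt' a b ↔ lt (nu U₁' U₂' x a) (nu U₁' U₂' x b))

/-- Case II extended Nielsen transformation. -/
def NielsenII (U₁ U₂ : List X) (lt : BRel) (U₁' U₂' : List X) (lt' : BRel) : Prop :=
  ∃ x y : X, NielsenIIxy U₁ U₂ lt U₁' U₂' lt' x y

/-- The dual boundary order. -/
def dualRel (lt : BRel) : BRel := fun a b => lt (3 - a.1, a.2) (3 - b.1, b.2)

/-- Case III extended Nielsen transformation: case II applied to the dual,
then dualized back. -/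
def NielsenIII (U₁ U₂ : List X) (lt : BRel) (U₁' U₂' : List X) (lt' : BRel) : Prop :=
  NielsenII U₂ U₁ (dualRel lt) U₂' U₁' (dualRel lt')

/-- `(U₁', U₂', lt')` is an extended Nielsen transformation of the nontrivial coherent
extended word equation `(U₁, U₂, lt)`. -/
def ExtNielsen (U₁ U₂ : List X) (lt : BRel) (U₁' U₂' : List X) (lt' : BRel) : Prop :=
  U₁ ≠ [] ∧ U₂ ≠ [] ∧ BoundaryOrder U₁ U₂ lt ∧ Coherent U₁ U₂ lt ∧
    (NielsenI U₁ U₂ lt U₁' U₂' lt' ∨ NielsenII U₁ U₂ lt U₁' U₂' lt' ∨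
      NielsenIII U₁ U₂ lt U₁' U₂' lt')

/-- A coherent extended Nielsen transformation. -/
def CohNielsen (U₁ U₂ : List X) (lt : BRel) (U₁' U₂' : List X) (lt' : BRel) : Prop :=
  ExtNielsen U₁ U₂ lt U₁' U₂' lt' ∧ Coherent U₁' U₂' lt'

/-- `(U₁, U₂, lt)` is (strongly) terminating: there is no infinite sequence of coherent
extended Nielsen transformations starting from it. -/
def Terminating (U₁ U₂ : List X) (lt : BRel) : Prop :=
  ¬ ∃ f : ℕ → List X × List X × BRel,
    f 0 = (U₁, U₂, lt) ∧
    ∀ n, CohNielsen (f n).1 (f n).2.1 (f n).2.2 (f (n + 1)).1 (f (n + 1)).2.1 (f (n + 1)).2.2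



section AuxLemmas

variable {X : Type*} [DecidableEq X]

omit [DecidableEq X] in
lemma word_length_pos {U₁ U₂ : List X} (h₁ : U₁ ≠ []) (h₂ : U₂ ≠ [])
    {i : ℕ} (hi : i = 1 ∨ i = 2) : 1 ≤ (word U₁ U₂ i).length := by
  rcases hi with rfl | rfl
  · simpa [word] using Nat.succ_le_of_lt (List.length_pos_iff.mpr h₁)
  · simpa [word] using Nat.succ_le_of_lt (List.length_pos_iff.mpr h₂)

omit [DecidableEq X] in
/-- In a boundary order, the conventional bottom boundaries lie below every
actual boundary. -/
lemma lt_of_bot {U₁ U₂ : List X} {lt : BRel} (hbo : BoundaryOrder U₁ U₂ lt)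
    (h₁ : U₁ ≠ []) (h₂ : U₂ ≠ []) {i : ℕ} (hi : i = 1 ∨ i = 2)
    {b : ℕ × ℕ} (hb : Boundary U₁ U₂ b) : lt (i, 0) b := by
  obtain ⟨i', n⟩ := b
  obtain ⟨hi', hn1, hn2⟩ := hb
  have e0 : ∀ i'', i'' = 1 ∨ i'' = 2 → EBoundary U₁ U₂ (i'', 0) :=
    fun i'' h => ⟨h, Nat.zero_le _⟩
  have eb : ∀ (i'' n' : ℕ), i'' = 1 ∨ i'' = 2 → n' ≤ (word U₁ U₂ i'').length →
      EBoundary U₁ U₂ (i'', n') := fun i'' n' h hn => ⟨h, hn⟩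
  have hL1 : 1 ≤ (word U₁ U₂ i').length := word_length_pos h₁ h₂ hi'
  have base : lt (i, 0) (i', 1) := by
    by_cases hii : i = i'
    · subst hii; exact hbo.succ i 0 (eb i 1 hi' hL1)
    · have hsucc : lt (i', 0) (i', 1) := hbo.succ i' 0 (eb i' 1 hi' hL1)
      by_contra h
      by_cases h2 : lt (i', 1) (i, 0)
      · have h3 : lt (i', 0) (i, 0) :=
          hbo.trans _ _ _ (e0 i' hi') (eb i' 1 hi' hL1) (e0 i hi) hsucc h2
        rcases hi with rfl | rfl <;> rcases hi' with rfl | rfl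
        · exact hii rfl
        · exact hbo.bot.2 h3
        · exact hbo.bot.1 h3
        · exact hii rfl
      · have hic : Incomp lt (i, 0) (i', 1) := ⟨h, h2⟩
        have hic2 : Incomp lt (i', 0) (i, 0) := by
          rcases hi with rfl | rfl <;> rcases hi' with rfl | rfl
          · exact absurd rfl hii
          · exact ⟨hbo.bot.2, hbo.bot.1⟩
          · exact ⟨hbo.bot.1, hbo.bot.2⟩
          · exact absurd rfl hii
        have := hbo.incomp_trans _ _ _ (e0 i' hi') (e0 i hi) (eb i' 1 hi' hL1)
          hic2 hic
        exact this.1 hsucc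
  have main : ∀ m : ℕ, m + 1 ≤ (word U₁ U₂ i').length → lt (i, 0) (i', m + 1) := by
    intro m
    induction m with
    | zero => intro _; exact base
    | succ q ih =>
      intro hq
      have ha : lt (i, 0) (i', q + 1) := ih (by omega)
      have hb' : lt (i', q + 1) (i', q + 1 + 1) :=
        hbo.succ i' (q + 1) (eb i' (q + 2) hi' hq)
      exact hbo.trans _ _ _ (e0 i hi) (eb i' (q + 1) hi' (by omega))
        (eb i' (q + 2) hi' hq) ha hb'
  obtain ⟨m, rfl⟩ : ∃ m, n = m + 1 := ⟨n - 1, by omega⟩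
  exact main m hn2

lemma expand_nil (x y : X) : expand x y [] = [] := rfl

lemma expand_cons (x y z : X) (l : List X) :
    expand x y (z :: l) = (if z = x then [y, x] else [z]) ++ expand x y l := rfl

lemma expand_append (x y : X) (l₁ l₂ : List X) :
    expand x y (l₁ ++ l₂) = expand x y l₁ ++ expand x y l₂ :=
  List.flatMap_append ..

lemma count_expand {x y : X} (hxy : y ≠ x) (l : List X) :
    (expand x y l).count x = l.count x := by
  induction l with
  | nil => rfl
  | cons z t ih =>
    rw [expand_cons, List.count_append, ih]
    by_cases hz : z = x <;> simp [hz, List.count_cons, hxy] <;> omega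

lemma length_expand (x y : X) (l : List X) :
    (expand x y l).length = l.length + l.count x := by
  induction l with
  | nil => rfl
  | cons z t ih =>
    rw [expand_cons, List.length_append, ih]
    by_cases hz : z = x <;> simp [hz, List.count_cons] <;> omega

lemma sum_expand {x y : X} (L' : X → ℕ) (l : List X) :
    ((expand x y l).map L').sum
      = ((l.map fun z => if z = x then L' x + L' y else L' z)).sum := by
  induction l with
  | nil => rfl
  | cons z t ih =>
    rw [expand_cons, List.map_append, List.sum_append, ih]
    by_cases hz : z = x <;> simp [hz] <;> omega

lemma expand_take {x y : X} (l : List X) :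
    ∀ (p : ℕ), p ≤ (expand x y l).length →
      (∃ k, k ≤ l.length ∧ (expand x y l).take p = expand x y (l.take k)) ∨
      (∃ k, k < l.length ∧ l[k]? = some x ∧ (expand x y l)[p]? = some x ∧
        (expand x y l).take p = expand x y (l.take k) ++ [y]) := by
  induction l with
  | nil =>
    intro p hp
    have : p = 0 := by simpa [expand_nil] using hp
    subst this
    exact Or.inl ⟨0, by simp, by simp [expand_nil]⟩
  | cons z t ih =>
    intro p hp
    by_cases hz : z = x
    · subst hz
      have hE : expand z y (z :: t) = y :: z :: expand z y t := by
        simp [expand_cons]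
      match p with
      | 0 => exact Or.inl ⟨0, by simp, by simp [expand_nil]⟩
      | 1 =>
        refine Or.inr ⟨0, by simp, by simp, ?_, ?_⟩
        · rw [hE]; simp
        · rw [hE]; simp [expand_nil]
      | (q+2) =>
        have hq : q ≤ (expand z y t).length := by
          rw [hE] at hp; simpa using hp
        rcases ih q hq with ⟨k, hk, he⟩ | ⟨k, hk, hlk, hek, he⟩
        · refine Or.inl ⟨k+1, by simpa using hk, ?_⟩
          rw [hE, List.take_succ_cons, List.take_succ_cons, he,
            List.take_succ_cons, expand_cons]
          simp
        · refine Or.inr ⟨k+1, by simpa using hk, by simpa using hlk, ?_, ?_⟩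
          · rw [hE]; simpa using hek
          · rw [hE, List.take_succ_cons, List.take_succ_cons, he,
              List.take_succ_cons, expand_cons]
            simp
    · have hE : expand x y (z :: t) = z :: expand x y t := by
        simp [expand_cons, hz]
      match p with
      | 0 => exact Or.inl ⟨0, by simp, by simp [expand_nil]⟩
      | (q+1) =>
        have hq : q ≤ (expand x y t).length := by
          rw [hE] at hp; simpa using hp
        rcases ih q hq with ⟨k, hk, he⟩ | ⟨k, hk, hlk, hek, he⟩
        · refine Or.inl ⟨k+1, by simpa using hk, ?_⟩
          rw [hE, List.take_succ_cons, he, List.take_succ_cons, expand_cons]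
          simp [hz]
        · refine Or.inr ⟨k+1, by simpa using hk, by simpa using hlk, ?_, ?_⟩
          · rw [hE]; simpa using hek
          · rw [hE, List.take_succ_cons, he, List.take_succ_cons, expand_cons]
            simp [hz]

omit [DecidableEq X] in
lemma sum_take_mono (f : X → ℕ) (l : List X) {m n : ℕ} (h : m ≤ n) :
    ((l.take m).map f).sum ≤ ((l.take n).map f).sum := by
  have h1 : (l.take n).take m = l.take m := by rw [List.take_take, min_eq_left h]
  have h2 : l.take m ++ (l.take n).drop m = l.take n := by
    rw [← h1, List.take_append_drop]
  rw [← h2, List.map_append, List.sum_append]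
  exact Nat.le_add_right _ _

omit [DecidableEq X] in
lemma sum_take_pos {f : X → ℕ} (hf : ∀ z, 0 < f z) {l : List X} {n : ℕ}
    (h1 : 1 ≤ n) (h2 : 1 ≤ l.length) : 0 < ((l.take n).map f).sum := by
  cases l with
  | nil => simp at h2
  | cons a t =>
    cases n with
    | zero => omega
    | succ m =>
      have := hf a
      simp [List.take_succ_cons]
      omega

omit [DecidableEq X] in
lemma sum_take_succ (f : X → ℕ) (l : List X) (m : ℕ) (hm : m < l.length) :
    ((l.take (m+1)).map f).sum = ((l.take m).map f).sum + f l[m] := by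
  rw [List.take_succ, List.getElem?_eq_getElem hm, List.map_append,
    List.sum_append]
  rfl

lemma count_take_succ (x : X) (l : List X) (m : ℕ) :
    (l.take (m+1)).count x
      = (l.take m).count x + (if l[m]? = some x then 1 else 0) := by
  rw [List.take_succ]
  rcases h : l[m]? with _ | z
  · simp [h]
  · by_cases hzx : z = x <;> simp [h, hzx, List.count_append, List.count_cons]

/-- Core lemma: analysis of a prefix of the expanded word. -/
lemma core {x y : X} (hxy : y ≠ x) (W W' : List X)
    (hW : expand x y W = y :: W') (L' : X → ℕ) (j : ℕ) (hj : j ≤ W'.length) :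
    (W'.take j).count x ≤ j ∧
    j - (W'.take j).count x + 1 ≤ W.length ∧
    ( ((W'.take j).map L').sum + L' y
        = ((W.take (j - (W'.take j).count x + 1)).map
            (fun z => if z = x then L' x + L' y else L' z)).sum
      ∨ ( ((W'.take j).map L').sum
            = ((W.take (j - (W'.take j).count x)).map
                (fun z => if z = x then L' x + L' y else L' z)).sum
          ∧ W'[j]? = some x ∧ j - (W'.take j).count x < W.length
          ∧ W[j - (W'.take j).count x]? = some x ) ) := by
  have hlen : (expand x y W).length = W'.length + 1 := by rw [hW]; simp
  have hp : j + 1 ≤ (expand x y W).length := by omega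
  rcases expand_take W (j+1) hp with ⟨k₁, hk₁, he⟩ | ⟨k₁, hk₁, hWk, hEp, he⟩
  · rw [hW, List.take_succ_cons] at he
    have hc := congrArg (List.count x) he
    rw [count_expand hxy] at hc
    simp [List.count_cons, hxy] at hc
    have hl := congrArg List.length he
    rw [length_expand] at hl
    simp at hl
    have hlt : (W.take k₁).length = k₁ := by
      rw [List.length_take]; omega
    have hctk : (W.take k₁).count x ≤ k₁ :=
      le_trans (List.count_le_length) (le_of_eq hlt)
    have hk₁pos : 1 ≤ k₁ := by omega
    have hcj : (W'.take j).count x = (W.take k₁).count x := hc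
    have hkval : j - (W'.take j).count x + 1 = k₁ := by omega
    refine ⟨by omega, by omega, Or.inl ?_⟩
    have hs := congrArg (fun l => (l.map L').sum) he
    rw [sum_expand] at hs
    rw [hkval]
    rw [List.map_cons, List.sum_cons] at hs
    omega
  · rw [hW, List.take_succ_cons] at he
    have hc := congrArg (List.count x) he
    rw [List.count_append, count_expand hxy] at hc
    simp [List.count_cons, hxy] at hc
    have hl := congrArg List.length he
    rw [List.length_append, length_expand] at hl
    simp at hl
    have hlt : (W.take k₁).length = k₁ := by
      rw [List.length_take]; omega
    have hctk : (W.take k₁).count x ≤ k₁ :=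
      le_trans (List.count_le_length) (le_of_eq hlt)
    have hcj : (W'.take j).count x = (W.take k₁).count x := hc
    have hkval : j - (W'.take j).count x = k₁ := by omega
    have hEp' : W'[j]? = some x := by
      rw [hW] at hEp; simpa using hEp
    refine ⟨by omega, by omega,
      Or.inr ⟨?_, hEp', by omega, by rw [hkval]; exact hWk⟩⟩
    have hs := congrArg (fun l => (l.map L').sum) he
    rw [List.map_append, List.sum_append, sum_expand] at hs
    rw [hkval]
    simp only [List.map_cons, List.map_nil, List.sum_cons, List.sum_nil] at hs
    omega

/-- Core lemma, μ-direction. -/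
lemma core_mu {x y : X} (hxy : y ≠ x) (W W' : List X)
    (hW : expand x y W = y :: W') (L' : X → ℕ) (k : ℕ)
    (hk1 : 1 ≤ k) (hk : k ≤ W.length) (h2 : 2 ≤ k + (W.take k).count x) :
    1 ≤ k + (W.take k).count x - 1 ∧ k + (W.take k).count x - 1 ≤ W'.length ∧
    (W'.take (k + (W.take k).count x - 1)).count x = (W.take k).count x ∧
    ((W'.take (k + (W.take k).count x - 1)).map L').sum + L' y
      = ((W.take k).map (fun z => if z = x then L' x + L' y else L' z)).sum := by
  set c := (W.take k).count x with hc
  have hsplit : expand x y W = expand x y (W.take k) ++ expand x y (W.drop k) := by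
    conv_lhs => rw [← List.take_append_drop k W]
    rw [expand_append]
  have hlt : (W.take k).length = k := by rw [List.length_take]; omega
  have hlen1 : (expand x y (W.take k)).length = k + c := by
    rw [length_expand, hlt]
  have htake : (expand x y W).take (k + c) = expand x y (W.take k) := by
    rw [hsplit]; exact List.take_left' hlen1
  have hcle : c ≤ W.count x := (List.take_sublist k W).count_le x
  have hlen : (expand x y W).length = W'.length + 1 := by rw [hW]; simp
  have hlenW : (expand x y W).length = W.length + W.count x := length_expand x y W
  have hle : k + c - 1 ≤ W'.length := by omega
  have hsucc : k + c = (k + c - 1) + 1 := by omega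
  rw [hW, hsucc, List.take_succ_cons] at htake
  have hcnt := congrArg (List.count x) htake
  rw [count_expand hxy] at hcnt
  simp [List.count_cons, hxy] at hcnt
  have hs := congrArg (fun l => (l.map L').sum) htake
  rw [sum_expand] at hs
  rw [List.map_cons, List.sum_cons] at hs
  exact ⟨by omega, hle, hcnt, by omega⟩

end AuxLemmas

/-- **Lemma.** After a case II coherent extended Nielsen transformation, if `(i,j)`
cuts `(i',j')` with respect to `(U₁',U₂',<')`, then `(i,ν(i,j))` cuts `(i',ν(i',j'))`
with respect to `(U₁,U₂,<)`. -/
theorem cuts_nu_of_cuts (U₁ U₂ U₁' U₂' : List X) (lt lt' : BRel) (x y : X)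
    (h₁ : U₁ ≠ []) (h₂ : U₂ ≠ []) (hbo : BoundaryOrder U₁ U₂ lt)
    (hcoh : Coherent U₁ U₂ lt)
    (hII : NielsenIIxy U₁ U₂ lt U₁' U₂' lt' x y) (hcoh' : Coherent U₁' U₂' lt') :
    ∀ a b, Cuts U₁' U₂' lt' a b →
      Cuts U₁ U₂ lt (nu U₁' U₂' x a) (nu U₁' U₂' x b) := by
  obtain ⟨hx, hy, hlt21, hU₁', hU₂', hbo', hcompat⟩ := hII
  obtain ⟨L, hLpos, hL⟩ := hcoh
  obtain ⟨L', hL'pos, hL'⟩ := hcoh'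
  obtain ⟨t₁, rfl⟩ : ∃ t, U₁ = x :: t := by
    cases U₁ with
    | nil => simp at hx
    | cons a t =>
      obtain rfl : a = x := by simpa using hx
      exact ⟨t, rfl⟩
  obtain ⟨t₂, rfl⟩ : ∃ t, U₂ = y :: t := by
    cases U₂ with
    | nil => simp at hy
    | cons a t =>
      obtain rfl : a = y := by simpa using hy
      exact ⟨t, rfl⟩
  have hb21 : Boundary (x::t₁) (y::t₂) (2,1) :=
    ⟨Or.inr rfl, le_refl 1, by simp [word]⟩
  have hb11 : Boundary (x::t₁) (y::t₂) (1,1) :=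
    ⟨Or.inl rfl, le_refl 1, by simp [word]⟩
  have hyx : L y < L x := by
    have h := (hL _ _ hb21 hb11).mp hlt21
    simpa [prefixLen, word] using h
  have hxy : y ≠ x := by rintro rfl; omega
  set L'' : X → ℕ := fun z => if z = x then L' x + L' y else L' z with hL''def
  have hL''x : L'' x = L' x + L' y := by simp [hL''def]
  have hL''y : L'' y = L' y := by simp [hL''def, hxy]
  have hL''pos : ∀ z, 0 < L'' z := by
    intro z
    simp only [hL''def]
    split
    · have := hL'pos x; omega
    · exact hL'pos z
  have heW : ∀ i : ℕ, expand x y (word (x::t₁) (y::t₂) i) = y :: word U₁' U₂' i := by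
    intro i
    by_cases hi : i = 1 <;>
      simp [word, hi, hU₁', hU₂', expand_cons, hxy]
  -- the core analysis, in terms of the two sides
  have hcore : ∀ i j : ℕ, j ≤ (word U₁' U₂' i).length →
      ((word U₁' U₂' i).take j).count x ≤ j ∧
      j - ((word U₁' U₂' i).take j).count x + 1 ≤ (word (x::t₁) (y::t₂) i).length ∧
      ( (((word U₁' U₂' i).take j).map L').sum + L' y
          = (((word (x::t₁) (y::t₂) i).take
              (j - ((word U₁' U₂' i).take j).count x + 1)).map L'').sum
        ∨ ( (((word U₁' U₂' i).take j).map L').sum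
              = (((word (x::t₁) (y::t₂) i).take
                  (j - ((word U₁' U₂' i).take j).count x)).map L'').sum
            ∧ (word U₁' U₂' i)[j]? = some x
            ∧ j - ((word U₁' U₂' i).take j).count x < (word (x::t₁) (y::t₂) i).length
            ∧ (word (x::t₁) (y::t₂) i)[j - ((word U₁' U₂' i).take j).count x]? = some x ) ) := by
    intro i j hj
    have H := core hxy _ _ (heW i) L' j hj
    rw [← hL''def] at H
    exact H
  have hclaim_bd : ∀ i j : ℕ, j ≤ (word U₁' U₂' i).length →
      1 ≤ j - ((word U₁' U₂' i).take j).count x + 1 ∧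
      j - ((word U₁' U₂' i).take j).count x + 1 ≤ (word (x::t₁) (y::t₂) i).length := by
    intro i j hj
    exact ⟨by omega, (hcore i j hj).2.1⟩
  have hclaim_up : ∀ i j : ℕ, j ≤ (word U₁' U₂' i).length →
      (((word U₁' U₂' i).take j).map L').sum + L' y
        ≤ (((word (x::t₁) (y::t₂) i).take
            (j - ((word U₁' U₂' i).take j).count x + 1)).map L'').sum := by
    intro i j hj
    obtain ⟨hc1, hc2, hdisj⟩ := hcore i j hj
    rcases hdisj with he | ⟨he, hm1, hm2, hm3⟩
    · omega
    · have hget : (word (x::t₁) (y::t₂) i)[j - ((word U₁' U₂' i).take j).count x] = x := by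
        have h' := List.getElem?_eq_getElem hm2
        rw [h'] at hm3
        exact Option.some.inj hm3
      have hstep := sum_take_succ L'' (word (x::t₁) (y::t₂) i) _ hm2
      rw [hget, hL''x] at hstep
      have := hL'pos x
      omega
  have hclaim_down : ∀ i j₀ : ℕ, j₀ + 1 ≤ (word U₁' U₂' i).length →
      (((word (x::t₁) (y::t₂) i).take
          (j₀ + 1 - ((word U₁' U₂' i).take (j₀+1)).count x)).map L'').sum
        ≤ (((word U₁' U₂' i).take j₀).map L').sum + L' y := by
    intro i j₀ hj
    obtain ⟨hc1, hc2, hdisj⟩ := hcore i j₀ (by omega)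
    have hcnt := count_take_succ x (word U₁' U₂' i) j₀
    rcases hdisj with he | ⟨he, hm1, hm2, hm3⟩
    · have hif : (if (word U₁' U₂' i)[j₀]? = some x then 1 else 0) ≤ 1 := by
        split <;> omega
      have hmono := sum_take_mono L'' (word (x::t₁) (y::t₂) i)
        (show j₀ + 1 - ((word U₁' U₂' i).take (j₀+1)).count x
            ≤ j₀ - ((word U₁' U₂' i).take j₀).count x + 1 by omega)
      omega
    · rw [if_pos hm1] at hcnt
      have hidx : j₀ + 1 - ((word U₁' U₂' i).take (j₀+1)).count x
          = j₀ - ((word U₁' U₂' i).take j₀).count x := by omega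
      rw [hidx]
      omega
  -- μ-direction
  have hmu : ∀ A : ℕ × ℕ, Boundary (x::t₁) (y::t₂) A → A ≠ (2,1) →
      Boundary U₁' U₂' (mu (x::t₁) (y::t₂) x A) ∧
      nu U₁' U₂' x (mu (x::t₁) (y::t₂) x A) = A ∧
      prefixLen U₁' U₂' L' (mu (x::t₁) (y::t₂) x A) + L' y
        = prefixLen (x::t₁) (y::t₂) L'' A ∧
      Bpminus (x::t₁) (y::t₂) x (mu (x::t₁) (y::t₂) x A) := by
    rintro ⟨i, k⟩ ⟨hi, hk1, hk2⟩ hA2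
    have h2 : 2 ≤ k + ((word (x::t₁) (y::t₂) i).take k).count x := by
      rcases Nat.lt_or_ge k 2 with hk | hk
      · have hk' : k = 1 := by omega
        subst hk'
        rcases hi with rfl | rfl
        · simp [word]
        · exact absurd rfl hA2
      · omega
    obtain ⟨hm1, hm2, hm3, hm4⟩ := core_mu hxy _ _ (heW i) L' k hk1 hk2 h2
    rw [← hL''def] at hm4
    have hmuA : mu (x::t₁) (y::t₂) x (i, k)
        = (i, k + ((word (x::t₁) (y::t₂) i).take k).count x - 1) := rfl
    refine ⟨?_, ?_, ?_, ?_⟩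
    · rw [hmuA]; exact ⟨hi, hm1, hm2⟩
    · rw [hmuA]
      have : nu U₁' U₂' x (i, k + ((word (x::t₁) (y::t₂) i).take k).count x - 1)
          = (i, (k + ((word (x::t₁) (y::t₂) i).take k).count x - 1)
              - ((word U₁' U₂' i).take
                  (k + ((word (x::t₁) (y::t₂) i).take k).count x - 1)).count x + 1) := rfl
      rw [this, hm3]
      have : (k + ((word (x::t₁) (y::t₂) i).take k).count x - 1)
          - ((word (x::t₁) (y::t₂) i).take k).count x + 1 = k := by omega
      rw [this]
    · rw [hmuA]
      simpa [prefixLen] using hm4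
    · exact ⟨(i, k), ⟨⟨hi, hk1, hk2⟩, hA2⟩, rfl⟩
  -- the (2,1) boundary is strictly below every other boundary, in both lengths
  have hgty : ∀ C : ℕ × ℕ, Boundary (x::t₁) (y::t₂) C → C ≠ (2,1) →
      L y < prefixLen (x::t₁) (y::t₂) L C ∧
      L' y < prefixLen (x::t₁) (y::t₂) L'' C := by
    rintro ⟨ic, kc⟩ ⟨hic, hkc1, hkc2⟩ hC2
    rcases hic with rfl | rfl
    · obtain ⟨m, rfl⟩ : ∃ m, kc = m + 1 := ⟨kc - 1, by omega⟩
      constructor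
      · have hcal : prefixLen (x::t₁) (y::t₂) L (1, m+1)
            = L x + ((t₁.take m).map L).sum := by
          simp [prefixLen, word, List.take_succ_cons]
        omega
      · have hcal : prefixLen (x::t₁) (y::t₂) L'' (1, m+1)
            = L'' x + ((t₁.take m).map L'').sum := by
          simp [prefixLen, word, List.take_succ_cons]
        have := hL'pos x
        omega
    · have hkc1' : kc ≠ 1 := fun h => hC2 (by rw [h])
      obtain ⟨m, rfl⟩ : ∃ m, kc = m + 2 := ⟨kc - 2, by omega⟩
      have hlt₂ : m + 1 ≤ t₂.length := by
        have : m + 2 ≤ (y::t₂).length := by simpa [word] using hkc2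
        simpa using this
      have hpos : 0 < ((t₂.take (m+1)).map L).sum :=
        sum_take_pos hLpos (by omega) (by omega)
      have hpos' : 0 < ((t₂.take (m+1)).map L'').sum :=
        sum_take_pos hL''pos (by omega) (by omega)
      constructor
      · have hcal : prefixLen (x::t₁) (y::t₂) L (2, m+2)
            = L y + ((t₂.take (m+1)).map L).sum := by
          simp [prefixLen, word, List.take_succ_cons]
        omega
      · have hcal : prefixLen (x::t₁) (y::t₂) L'' (2, m+2)
            = L'' y + ((t₂.take (m+1)).map L'').sum := by
          simp [prefixLen, word, List.take_succ_cons]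
        omega
  have hPy : prefixLen (x::t₁) (y::t₂) L'' (2,1) = L' y := by
    simp [prefixLen, word, hL''y]
  have hLy : prefixLen (x::t₁) (y::t₂) L (2,1) = L y := by
    simp [prefixLen, word]
  -- coherence of L'' for the original equation
  have hcohP : ∀ A B : ℕ × ℕ, Boundary (x::t₁) (y::t₂) A →
      Boundary (x::t₁) (y::t₂) B →
      (lt A B ↔ prefixLen (x::t₁) (y::t₂) L'' A < prefixLen (x::t₁) (y::t₂) L'' B) := by
    intro A B hA hB
    by_cases hA2 : A = (2,1) <;> by_cases hB2 : B = (2,1)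
    · subst hA2; subst hB2
      rw [hL _ _ hA hB]; simp
    · subst hA2
      have hg := hgty B hB hB2
      constructor
      · intro _; omega
      · intro _
        apply (hL _ _ hA hB).mpr
        omega
    · subst hB2
      have hg := hgty A hA hA2
      constructor
      · intro hlt'
        exfalso
        have := (hL _ _ hA hB).mp hlt'
        omega
      · intro hP; exfalso; omega
    · obtain ⟨hbdA, hnuA, hsumA, hbpA⟩ := hmu A hA hA2
      obtain ⟨hbdB, hnuB, hsumB, hbpB⟩ := hmu B hB hB2
      have h1 := hcompat _ _ hbpA hbpB
      rw [hnuA, hnuB] at h1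
      rw [hL' _ _ hbdA hbdB] at h1
      rw [← h1]
      omega
  -- positivity and strictness for the primed equation
  have hS'pos : ∀ c : ℕ × ℕ, Boundary U₁' U₂' c →
      0 < prefixLen U₁' U₂' L' c := by
    rintro ⟨ic, jc⟩ ⟨hic, h1, h2⟩
    exact sum_take_pos hL'pos h1 (le_trans h1 h2)
  have hstrict : ∀ c d : ℕ × ℕ, Boundary U₁' U₂' c → Boundary U₁' U₂' d →
      lt' (c.1, c.2 - 1) d →
      prefixLen U₁' U₂' L' (c.1, c.2 - 1) < prefixLen U₁' U₂' L' d := by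
    rintro ⟨ic, jc⟩ d hc hd hltcd
    rcases Nat.lt_or_ge jc 2 with hjc | hjc
    · have hjc1 : jc = 1 := by
        have := hc.2.1; omega
      subst hjc1
      have : prefixLen U₁' U₂' L' (ic, 1 - 1) = 0 := by
        simp [prefixLen]
      rw [this]
      exact hS'pos d hd
    · exact (hL' (ic, jc - 1) d
        ⟨hc.1, by omega, le_trans (by omega) hc.2.2⟩ hd).mp hltcd
  -- main argument
  rintro ⟨i, j⟩ ⟨i', j'⟩ ⟨ha, hb, hab, hlt1, hlt2⟩
  have hnua : nu U₁' U₂' x (i, j)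
      = (i, j - ((word U₁' U₂' i).take j).count x + 1) := rfl
  have hnub : nu U₁' U₂' x (i', j')
      = (i', j' - ((word U₁' U₂' i').take j').count x + 1) := rfl
  rw [hnua, hnub]
  obtain ⟨hbdA1, hbdA2⟩ := hclaim_bd i j ha.2.2
  obtain ⟨hbdB1, hbdB2⟩ := hclaim_bd i' j' hb.2.2
  have hBA : Boundary (x::t₁) (y::t₂)
      (i, j - ((word U₁' U₂' i).take j).count x + 1) := ⟨ha.1, hbdA1, hbdA2⟩
  have hBB : Boundary (x::t₁) (y::t₂)
      (i', j' - ((word U₁' U₂' i').take j').count x + 1) := ⟨hb.1, hbdB1, hbdB2⟩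
  have hs1 : prefixLen U₁' U₂' L' (i, j - 1) < prefixLen U₁' U₂' L' (i', j') :=
    hstrict (i, j) (i', j') ha hb hlt1
  have hs2 : prefixLen U₁' U₂' L' (i', j' - 1) < prefixLen U₁' U₂' L' (i, j) :=
    hstrict (i', j') (i, j) hb ha hlt2
  refine ⟨hBA, hBB, ?_, ?_, ?_⟩
  · -- the images are distinct
    intro heq
    have hii : i = i' := congrArg Prod.fst heq
    subst hii
    have hj1 : 1 ≤ j := ha.2.1
    have hj1' : 1 ≤ j' := hb.2.1
    have hle1 : ¬ j' ≤ j - 1 := by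
      intro hle
      exact absurd hs1 (not_lt.mpr (sum_take_mono L' (word U₁' U₂' i) hle))
    have hle2 : ¬ j ≤ j' - 1 := by
      intro hle
      exact absurd hs2 (not_lt.mpr (sum_take_mono L' (word U₁' U₂' i) hle))
    have : j = j' := by omega
    subst this
    exact hab rfl
  · -- first cut inequality
    have hj1 : 1 ≤ j := ha.2.1
    obtain ⟨j₀, rfl⟩ : ∃ j₀, j = j₀ + 1 := ⟨j - 1, by omega⟩
    set k := j₀ + 1 - ((word U₁' U₂' i).take (j₀+1)).count x + 1 with hkdef
    rcases Nat.lt_or_ge k 2 with hk2 | hk2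
    · have hk1 : k = 1 := by omega
      rw [show ((i, k) : ℕ × ℕ).2 - 1 = 0 by simp [hk1]]
      exact lt_of_bot hbo (by simp) (by simp) ha.1 hBB
    · have hBd : Boundary (x::t₁) (y::t₂) (i, k - 1) :=
        ⟨ha.1, (by omega : 1 ≤ k - 1),
          (by omega : k - 1 ≤ (word (x::t₁) (y::t₂) i).length)⟩
      have h := (hcohP (i, k - 1) _ hBd hBB).mpr
      apply h
      have hdown := hclaim_down i j₀ ha.2.2
      have hup := hclaim_up i' j' hb.2.2
      have hidx : k - 1 = j₀ + 1 - ((word U₁' U₂' i).take (j₀+1)).count x := by omega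
      have hPA : prefixLen (x::t₁) (y::t₂) L'' (i, k - 1)
          = (((word (x::t₁) (y::t₂) i).take
              (j₀ + 1 - ((word U₁' U₂' i).take (j₀+1)).count x)).map L'').sum := by
        rw [hidx]; rfl
      have hs1' : (((word U₁' U₂' i).take (j₀ + 1 - 1)).map L').sum
          < (((word U₁' U₂' i').take j').map L').sum := hs1
      simp only [Nat.add_sub_cancel] at hs1'
      have hPB : prefixLen (x::t₁) (y::t₂) L''
          (i', j' - ((word U₁' U₂' i').take j').count x + 1)
            = (((word (x::t₁) (y::t₂) i').take
              (j' - ((word U₁' U₂' i').take j').count x + 1)).map L'').sum := rfl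
      rw [hPA, hPB]
      omega
  · -- second cut inequality
    have hj1' : 1 ≤ j' := hb.2.1
    obtain ⟨j₀, rfl⟩ : ∃ j₀, j' = j₀ + 1 := ⟨j' - 1, by omega⟩
    set k := j₀ + 1 - ((word U₁' U₂' i').take (j₀+1)).count x + 1 with hkdef
    rcases Nat.lt_or_ge k 2 with hk2 | hk2
    · have hk1 : k = 1 := by omega
      rw [show ((i', k) : ℕ × ℕ).2 - 1 = 0 by simp [hk1]]
      exact lt_of_bot hbo (by simp) (by simp) hb.1 hBA
    · have hBd : Boundary (x::t₁) (y::t₂) (i', k - 1) :=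
        ⟨hb.1, (by omega : 1 ≤ k - 1),
          (by omega : k - 1 ≤ (word (x::t₁) (y::t₂) i').length)⟩
      have h := (hcohP (i', k - 1) _ hBd hBA).mpr
      apply h
      have hdown := hclaim_down i' j₀ hb.2.2
      have hup := hclaim_up i j ha.2.2
      have hidx : k - 1 = j₀ + 1 - ((word U₁' U₂' i').take (j₀+1)).count x := by omega
      have hPA : prefixLen (x::t₁) (y::t₂) L'' (i', k - 1)
          = (((word (x::t₁) (y::t₂) i').take
              (j₀ + 1 - ((word U₁' U₂' i').take (j₀+1)).count x)).map L'').sum := by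
        rw [hidx]; rfl
      have hs2' : (((word U₁' U₂' i').take (j₀ + 1 - 1)).map L').sum
          < (((word U₁' U₂' i).take j).map L').sum := hs2
      simp only [Nat.add_sub_cancel] at hs2'
      have hPB : prefixLen (x::t₁) (y::t₂) L''
          (i, j - ((word U₁' U₂' i).take j).count x + 1)
            = (((word (x::t₁) (y::t₂) i).take
              (j - ((word U₁' U₂' i).take j).count x + 1)).map L'').sum := rfl
      rw [hPA, hPB]
      omega


end ExtWordEq
end

section
/- Let (U₁,U₂,<) be an extended word equation. If the cut graph G_{U₁,U₂,<} is cyclic, then there is some cycle of minimum length in G_{U₁,U₂,<} that is pointed with respect to some auxiliary set. -/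
open scoped Classical

namespace ExtWordEq

variable {X : Type*}

variable [DecidableEq X]

lemma cuts_symm {U₁ U₂ : List X} {lt : BRel} {a b : ℕ × ℕ}
    (h : Cuts U₁ U₂ lt a b) : Cuts U₁ U₂ lt b a :=
  ⟨h.2.1, h.1, h.2.2.1.symm, h.2.2.2.2, h.2.2.2.1⟩

lemma mirrors_symm {U₁ U₂ : List X} {lt : BRel} {a b : ℕ × ℕ}
    (h : Mirrors U₁ U₂ lt a b) : Mirrors U₁ U₂ lt b a := by
  obtain ⟨ha, hb, hl, hd⟩ := h
  refine ⟨hb, ha, hl.symm, ?_⟩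
  unfold Incomp at *
  tauto

lemma boundary_eboundary {U₁ U₂ : List X} {b : ℕ × ℕ}
    (h : Boundary U₁ U₂ b) : EBoundary U₁ U₂ b := ⟨h.1, h.2.2⟩

/-- A finite nonempty set with a relation that is irreflexive and transitive on it
has a minimal element. -/
lemma finset_exists_min {α : Type*} [DecidableEq α] (r : α → α → Prop) :
    ∀ S : Finset α, (∀ a ∈ S, ¬ r a a) →
      (∀ a ∈ S, ∀ b ∈ S, ∀ c ∈ S, r a b → r b c → r a c) →
      S.Nonempty → ∃ m ∈ S, ∀ s ∈ S, ¬ r s m := by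
  intro S
  induction S using Finset.induction_on with
  | empty => intro _ _ h; exact absurd h (by simp)
  | @insert a S' ha ih =>
    intro hirr htr _
    rcases S'.eq_empty_or_nonempty with hS' | hS'
    · subst hS'
      exact ⟨a, by simp, by simpa using hirr a (by simp)⟩
    · obtain ⟨m', hm'S, hm'min⟩ := ih
        (fun x hx => hirr x (Finset.mem_insert_of_mem hx))
        (fun x hx y hy z hz => htr x (Finset.mem_insert_of_mem hx) y
          (Finset.mem_insert_of_mem hy) z (Finset.mem_insert_of_mem hz)) hS'
      by_cases hra : r a m'
      · refine ⟨a, Finset.mem_insert_self a S', ?_⟩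
        intro s hs hsa
        rcases Finset.mem_insert.mp hs with h1 | hs'
        · subst h1; exact hirr s hs hsa
        · exact hm'min s hs' (htr s (Finset.mem_insert_of_mem hs')
            a (Finset.mem_insert_self a S') m' (Finset.mem_insert_of_mem hm'S) hsa hra)
      · refine ⟨m', Finset.mem_insert_of_mem hm'S, ?_⟩
        intro s hs
        rcases Finset.mem_insert.mp hs with h1 | hs'
        · subst h1; exact hra
        · exact hm'min s hs'

/-- Rotating a cycle (given in "cuts/mirrors with wraparound" form) by `k`. -/
lemma rotate_cycle {U₁ U₂ : List X} {lt : BRel} {n : ℕ} (hn : 0 < n)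
    (W C : ℕ → ℕ × ℕ)
    (h : ∀ a < n, Cuts U₁ U₂ lt (W a) (C a) ∧
      Mirrors U₁ U₂ lt (C a) (W ((a + 1) % n)))
    (k : ℕ) (hk : k < n) :
    IsCycle U₁ U₂ lt n (fun j => W ((k + j) % n)) ∧
      ∀ j < n, Cuts U₁ U₂ lt (W ((k + j) % n)) (C ((k + j) % n)) ∧
        Mirrors U₁ U₂ lt (C ((k + j) % n)) (W ((k + (j + 1)) % n)) := by
  have hmod : ∀ j : ℕ, (k + (j + 1)) % n = ((k + j) % n + 1) % n := by
    intro j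
    have h1 := ((Nat.mod_modEq (k + j) n).add_right 1).symm
    unfold Nat.ModEq at h1
    simpa [Nat.add_assoc] using h1
  have hlt : ∀ j : ℕ, (k + j) % n < n := fun j => Nat.mod_lt _ hn
  refine ⟨⟨hn, ?_, ?_⟩, ?_⟩
  · simp [Nat.add_mod_right, Nat.mod_eq_of_lt hk]
  · intro j hj
    refine ⟨C ((k + j) % n), (h _ (hlt j)).1, ?_⟩
    have := (h _ (hlt j)).2
    simpa [hmod j] using this
  · intro j hj
    refine ⟨(h _ (hlt j)).1, ?_⟩
    have := (h _ (hlt j)).2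
    simpa [hmod j] using this

/-- **Lemma.** If the cut graph of an extended word equation is cyclic, then it
contains a cycle of minimum length that is pointed with respect to some
auxiliary set. -/
theorem exists_pointed_min_cycle (U₁ U₂ : List X) (lt : BRel)
    (hbo : BoundaryOrder U₁ U₂ lt)
    (hcyc : ∃ n w, IsCycle U₁ U₂ lt n w) :
    ∃ n w, IsCycle U₁ U₂ lt n w ∧
      (∀ (n' : ℕ) (w' : ℕ → ℕ × ℕ), IsCycle U₁ U₂ lt n' w' → n ≤ n') ∧
      ∃ c : ℕ → ℕ × ℕ,
        (∀ k < n, Cuts U₁ U₂ lt (w k) (c k) ∧ Mirrors U₁ U₂ lt (c k) (w (k + 1))) ∧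
        (∀ k < n, ¬ lt (w k) (w 0) ∧ ¬ lt (c k) (w 0)) := by
  classical
  have hP : ∃ n, ∃ w, IsCycle U₁ U₂ lt n w := hcyc
  obtain ⟨w, hw⟩ := Nat.find_spec hP
  set n := Nat.find hP with hn_def
  have hminlen : ∀ (n' : ℕ) (w' : ℕ → ℕ × ℕ), IsCycle U₁ U₂ lt n' w' → n ≤ n' :=
    fun n' w' h => Nat.find_le ⟨w', h⟩
  obtain ⟨hn, hwn, hedge⟩ := hw
  -- choose cut witnesses
  have hch : ∀ k, ∃ d, k < n →
      Cuts U₁ U₂ lt (w k) d ∧ Mirrors U₁ U₂ lt d (w (k + 1)) := by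
    intro k
    by_cases hk : k < n
    · obtain ⟨d, hd⟩ := hedge k hk; exact ⟨d, fun _ => hd⟩
    · exact ⟨(0, 0), fun h => absurd h hk⟩
  choose c hc using hch
  have hcut : ∀ k < n, Cuts U₁ U₂ lt (w k) (c k) := fun k hk => (hc k hk).1
  have hmir : ∀ k < n, Mirrors U₁ U₂ lt (c k) (w (k + 1)) := fun k hk => (hc k hk).2
  -- the auxiliary set
  set S : Finset (ℕ × ℕ) := (Finset.range n).image w ∪ (Finset.range n).image c
    with hS_def
  have hSw : ∀ k < n, w k ∈ S := by
    intro k hk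
    simp only [hS_def, Finset.mem_union, Finset.mem_image, Finset.mem_range]
    exact Or.inl ⟨k, hk, rfl⟩
  have hSc : ∀ k < n, c k ∈ S := by
    intro k hk
    simp only [hS_def, Finset.mem_union, Finset.mem_image, Finset.mem_range]
    exact Or.inr ⟨k, hk, rfl⟩
  have hSB : ∀ s ∈ S, EBoundary U₁ U₂ s := by
    intro s hs
    simp only [hS_def, Finset.mem_union, Finset.mem_image, Finset.mem_range] at hs
    rcases hs with ⟨k, hk, rfl⟩ | ⟨k, hk, rfl⟩
    · exact boundary_eboundary (hcut k hk).1
    · exact boundary_eboundary (hcut k hk).2.1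
  obtain ⟨m, hmS, hmmin⟩ := finset_exists_min lt S
    (fun a ha => hbo.irrefl a (hSB a ha))
    (fun a ha b hb d hd => hbo.trans a b d (hSB a ha) (hSB b hb) (hSB d hd))
    ⟨w 0, hSw 0 hn⟩
  -- wraparound form of the mirrors condition for the cycle w
  have hstep : ∀ a < n, w ((a + 1) % n) = w (a + 1) := by
    intro a ha
    rcases eq_or_lt_of_le (Nat.succ_le_of_lt ha) with h | h
    · have h' : a + 1 = n := h
      rw [h', Nat.mod_self, hwn]
    · rw [Nat.mod_eq_of_lt h]
  have hwc : ∀ a < n, Cuts U₁ U₂ lt (w a) (c a) ∧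
      Mirrors U₁ U₂ lt (c a) (w ((a + 1) % n)) := by
    intro a ha
    refine ⟨hcut a ha, ?_⟩
    rw [hstep a ha]
    exact hmir a ha
  -- the reversed cycle through the witnesses
  have hcc : ∀ a < n, Cuts U₁ U₂ lt (c (n - 1 - a)) (w (n - 1 - a)) ∧
      Mirrors U₁ U₂ lt (w (n - 1 - a)) (c (n - 1 - (a + 1) % n)) := by
    intro a ha
    have hi : n - 1 - a < n := by omega
    refine ⟨cuts_symm (hcut _ hi), ?_⟩
    rcases eq_or_lt_of_le (Nat.succ_le_of_lt ha) with h | h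
    · -- a + 1 = n
      have h'' : a + 1 = n := h
      have h1 : (a + 1) % n = 0 := by rw [h'', Nat.mod_self]
      have h2 : n - 1 - a = 0 := by omega
      rw [h1, h2]
      have := mirrors_symm (hmir (n - 1) (by omega))
      have h3 : n - 1 + 1 = n := by omega
      rw [h3, hwn] at this
      simpa using this
    · -- a + 1 < n
      have h1 : (a + 1) % n = a + 1 := Nat.mod_eq_of_lt h
      have h2 : n - 1 - a ≥ 1 := by omega
      rw [h1]
      have := mirrors_symm (hmir (n - 1 - (a + 1)) (by omega))
      have h3 : n - 1 - (a + 1) + 1 = n - 1 - a := by omega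
      rw [h3] at this
      exact this
  -- which kind of element is the minimum?
  have hmcases : (∃ k < n, w k = m) ∨ (∃ k < n, c k = m) := by
    simp only [hS_def, Finset.mem_union, Finset.mem_image, Finset.mem_range] at hmS
    tauto
  rcases hmcases with ⟨k, hk, hkm⟩ | ⟨k, hk, hkm⟩
  · -- rotate the original cycle to start at w k
    obtain ⟨hcyc', hprop⟩ := rotate_cycle hn w c hwc k hk
    refine ⟨n, _, hcyc', hminlen, fun j => c ((k + j) % n), fun j hj => hprop j hj, ?_⟩
    intro j hj
    have h0 : (k + 0) % n = k := by simp [Nat.mod_eq_of_lt hk]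
    have hjn : (k + j) % n < n := Nat.mod_lt _ hn
    constructor
    · show ¬ lt (w ((k + j) % n)) (w ((k + 0) % n))
      rw [h0, hkm]
      exact hmmin _ (hSw _ hjn)
    · show ¬ lt (c ((k + j) % n)) (w ((k + 0) % n))
      rw [h0, hkm]
      exact hmmin _ (hSc _ hjn)
  · -- use the reversed cycle through the witnesses, starting at c k
    have hk' : n - 1 - k < n := by omega
    obtain ⟨hcyc', hprop⟩ := rotate_cycle hn (fun a => c (n - 1 - a))
      (fun a => w (n - 1 - a)) hcc (n - 1 - k) hk'
    refine ⟨n, _, hcyc', hminlen,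
      fun j => w (n - 1 - (n - 1 - k + j) % n), fun j hj => hprop j hj, ?_⟩
    intro j hj
    have h0 : n - 1 - (n - 1 - k + 0) % n = k := by
      rw [Nat.add_zero, Nat.mod_eq_of_lt hk']; omega
    have hjn : n - 1 - (n - 1 - k + j) % n < n := by
      have := Nat.mod_lt (n - 1 - k + j) hn; omega
    constructor
    · show ¬ lt (c (n - 1 - (n - 1 - k + j) % n)) (c (n - 1 - (n - 1 - k + 0) % n))
      rw [h0, hkm]
      exact hmmin _ (hSc _ hjn)
    · show ¬ lt (w (n - 1 - (n - 1 - k + j) % n)) (c (n - 1 - (n - 1 - k + 0) % n))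
      rw [h0, hkm]
      exact hmmin _ (hSw _ hjn)

end ExtWordEq
end
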